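/- Let t ≥ 1 and K ≥ 1 be integers, I ⊆ [K] an index set with |I| ≥ 1, and let x, y ∈ (0,1]^K, c ∈ ℝ, and ℓ ∈ [0,∞)^K with ℓ_i = 0 for all i ∈ [K] except possibly one index. Suppose ∑_{i∈I} x_i = ∑_{i∈I} y_i and, for every i ∈ I, 3·K^{1/6}·√t·y_i^{−1/3} = 3·K^{1/6}·√t·x_i^{−1/3} + ℓ_i − c. Then ∑_{i∈I} y_i^{4/3} ≤ 8·∑_{i∈I} x_i^{4/3}. -/

import Mathlib

open Real Finset

/-- Comparison via the `-1/3` power. -/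
lemma neg_third_le_iff {a b : ℝ} (ha : 0 < a) (hb : 0 < b) :
    a ^ (-(1 : ℝ) / 3) ≤ b ^ (-(1 : ℝ) / 3) ↔ b ≤ a := by
  have h3 : (-(1 : ℝ) / 3) < 0 := by norm_num
  exact Real.rpow_le_rpow_iff_of_neg ha hb h3

lemma neg_third_lt_iff {a b : ℝ} (ha : 0 < a) (hb : 0 < b) :
    a ^ (-(1 : ℝ) / 3) < b ^ (-(1 : ℝ) / 3) ↔ b < a := by
  have h3 : (-(1 : ℝ) / 3) < 0 := by norm_num
  exact Real.rpow_lt_rpow_iff_of_neg ha hb h3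

/-- Superadditivity of `· ^ (4/3)` over a finite sum of nonnegatives. -/
lemma sum_rpow_four_thirds_le {ι : Type*} (S : Finset ι) (f : ι → ℝ)
    (hf : ∀ i ∈ S, 0 ≤ f i) :
    ∑ i ∈ S, (f i) ^ ((4 : ℝ) / 3) ≤ (∑ i ∈ S, f i) ^ ((4 : ℝ) / 3) := by
  have hsum : 0 ≤ ∑ i ∈ S, f i := Finset.sum_nonneg hf
  have h43 : ((4 : ℝ) / 3) = 1 + (1 : ℝ) / 3 := by norm_num
  have key : ∀ i ∈ S, (f i) ^ ((4 : ℝ) / 3) ≤ f i * (∑ j ∈ S, f j) ^ ((1 : ℝ) / 3) := by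
    intro i hi
    have hle : f i ≤ ∑ j ∈ S, f j := Finset.single_le_sum hf hi
    have : (f i) ^ ((4 : ℝ) / 3) = f i * (f i) ^ ((1 : ℝ) / 3) := by
      rw [h43, Real.rpow_add' (hf i hi) (by norm_num), Real.rpow_one]
    rw [this]
    exact mul_le_mul_of_nonneg_left
      (Real.rpow_le_rpow (hf i hi) hle (by norm_num)) (hf i hi)
  calc ∑ i ∈ S, (f i) ^ ((4 : ℝ) / 3)
      ≤ ∑ i ∈ S, f i * (∑ j ∈ S, f j) ^ ((1 : ℝ) / 3) := Finset.sum_le_sum key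
    _ = (∑ i ∈ S, f i) * (∑ j ∈ S, f j) ^ ((1 : ℝ) / 3) := by rw [← Finset.sum_mul]
    _ = (∑ i ∈ S, f i) ^ ((4 : ℝ) / 3) := by
        rw [h43, Real.rpow_add' hsum (by norm_num), Real.rpow_one]

/-- `(a+b)^{4/3} ≤ 2^{4/3} (a^{4/3} + b^{4/3})` for nonnegative `a b`. -/
lemma add_rpow_four_thirds_le {a b : ℝ} (ha : 0 ≤ a) (hb : 0 ≤ b) :
    (a + b) ^ ((4 : ℝ) / 3) ≤ 2 ^ ((4 : ℝ) / 3) * (a ^ ((4 : ℝ) / 3) + b ^ ((4 : ℝ) / 3)) := by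
  have hmax : 0 ≤ max a b := le_trans ha (le_max_left _ _)
  have h1 : a + b ≤ 2 * max a b := by
    rcases le_total a b with h | h
    · simp [max_eq_right h]; linarith
    · simp [max_eq_left h]; linarith
  have h2 : (a + b) ^ ((4 : ℝ) / 3) ≤ (2 * max a b) ^ ((4 : ℝ) / 3) :=
    Real.rpow_le_rpow (by linarith) h1 (by norm_num)
  have h3 : (2 * max a b) ^ ((4 : ℝ) / 3)
      = 2 ^ ((4 : ℝ) / 3) * (max a b) ^ ((4 : ℝ) / 3) :=
    Real.mul_rpow (by norm_num) hmax
  have h4 : (max a b) ^ ((4 : ℝ) / 3) ≤ a ^ ((4 : ℝ) / 3) + b ^ ((4 : ℝ) / 3) := by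
    rcases le_total a b with h | h
    · rw [max_eq_right h]
      have : 0 ≤ a ^ ((4 : ℝ) / 3) := Real.rpow_nonneg ha _
      linarith
    · rw [max_eq_left h]
      have : 0 ≤ b ^ ((4 : ℝ) / 3) := Real.rpow_nonneg hb _
      linarith
  calc (a + b) ^ ((4 : ℝ) / 3) ≤ 2 ^ ((4 : ℝ) / 3) * (max a b) ^ ((4 : ℝ) / 3) := by
        rw [← h3]; exact h2
    _ ≤ 2 ^ ((4 : ℝ) / 3) * (a ^ ((4 : ℝ) / 3) + b ^ ((4 : ℝ) / 3)) :=
        mul_le_mul_of_nonneg_left h4 (Real.rpow_nonneg (by norm_num) _)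

/-- Corollary D.2 (`col:group_multiplicative_relation`). -/
theorem group_multiplicative_relation_same_lr
    (t K : ℕ) (ht : 1 ≤ t) (hK : 1 ≤ K)
    (I : Finset (Fin K)) (hI : I.Nonempty)
    (x y : Fin K → ℝ)
    (hx : ∀ i, x i ∈ Set.Ioc (0 : ℝ) 1) (hy : ∀ i, y i ∈ Set.Ioc (0 : ℝ) 1)
    (c : ℝ) (ℓ : Fin K → ℝ) (hℓ : ∀ i, 0 ≤ ℓ i)
    (hsupp : ∃ i₀ : Fin K, ∀ i, i ≠ i₀ → ℓ i = 0)
    (hsum : ∑ i ∈ I, x i = ∑ i ∈ I, y i)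
    (hkkt : ∀ i ∈ I,
      3 * (K : ℝ) ^ ((1 : ℝ) / 6) * Real.sqrt (t : ℝ) * (y i) ^ (-(1 : ℝ) / 3)
        = 3 * (K : ℝ) ^ ((1 : ℝ) / 6) * Real.sqrt (t : ℝ) * (x i) ^ (-(1 : ℝ) / 3)
          + ℓ i - c) :
    ∑ i ∈ I, (y i) ^ ((4 : ℝ) / 3) ≤ 8 * ∑ i ∈ I, (x i) ^ ((4 : ℝ) / 3) := by
  obtain ⟨i₀, hi₀⟩ := hsupp
  set γ : ℝ := 3 * (K : ℝ) ^ ((1 : ℝ) / 6) * Real.sqrt (t : ℝ) with hγdef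
  have hKpos : (0 : ℝ) < (K : ℝ) ^ ((1 : ℝ) / 6) :=
    Real.rpow_pos_of_pos (by exact_mod_cast hK.trans_lt' (by norm_num)) _
  have htpos : (0 : ℝ) < Real.sqrt (t : ℝ) :=
    Real.sqrt_pos.2 (by exact_mod_cast ht.trans_lt' (by norm_num))
  have hγ : 0 < γ := by positivity
  have hxpos : ∀ i, 0 < x i := fun i => (hx i).1
  have hypos : ∀ i, 0 < y i := fun i => (hy i).1
  -- basic consequences of KKT
  have hdiff : ∀ i ∈ I, γ * ((y i) ^ (-(1 : ℝ) / 3) - (x i) ^ (-(1 : ℝ) / 3)) = ℓ i - c := by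
    intro i hi
    have := hkkt i hi
    ring_nf at this ⊢
    linarith
  have hle_of : ∀ i ∈ I, 0 ≤ ℓ i - c → y i ≤ x i := by
    intro i hi h
    have h1 := hdiff i hi
    have h2 : (x i) ^ (-(1 : ℝ) / 3) ≤ (y i) ^ (-(1 : ℝ) / 3) := by nlinarith
    exact (neg_third_le_iff (hxpos i) (hypos i)).1 h2
  have hlt_of : ∀ i ∈ I, ℓ i - c < 0 → x i < y i := by
    intro i hi h
    have h1 := hdiff i hi
    have h2 : (y i) ^ (-(1 : ℝ) / 3) < (x i) ^ (-(1 : ℝ) / 3) := by nlinarith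
    exact (neg_third_lt_iff (hypos i) (hxpos i)).1 h2
  have hsumx_nonneg : 0 ≤ ∑ i ∈ I, (x i) ^ ((4 : ℝ) / 3) :=
    Finset.sum_nonneg fun i _ => Real.rpow_nonneg (hxpos i).le _
  by_cases hc : c ≤ 0
  · -- all coordinates decrease
    have h1 : ∑ i ∈ I, (y i) ^ ((4 : ℝ) / 3) ≤ ∑ i ∈ I, (x i) ^ ((4 : ℝ) / 3) := by
      refine Finset.sum_le_sum fun i hi => ?_
      exact Real.rpow_le_rpow (hypos i).le
        (hle_of i hi (by have := hℓ i; linarith)) (by norm_num)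
    linarith
  push_neg at hc
  -- c > 0 : all coordinates except i₀ increase; i₀ must be in I and absorb
  have hinc : ∀ i ∈ I, i ≠ i₀ → x i < y i := by
    intro i hi hne
    exact hlt_of i hi (by rw [hi₀ i hne]; linarith)
  have hi₀I : i₀ ∈ I := by
    by_contra h
    have hall : ∀ i ∈ I, x i < y i := fun i hi => hinc i hi (fun he => h (he ▸ hi))
    exact absurd hsum (ne_of_lt (Finset.sum_lt_sum_of_nonempty hI hall))
  have hcℓ : c ≤ ℓ i₀ := by
    by_contra h
    push_neg at h
    have hall : ∀ i ∈ I, x i < y i := by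
      intro i hi
      rcases eq_or_ne i i₀ with rfl | hne
      · exact hlt_of i hi (by linarith)
      · exact hinc i hi hne
    exact absurd hsum (ne_of_lt (Finset.sum_lt_sum_of_nonempty hI hall))
  have hyx₀ : y i₀ ≤ x i₀ := hle_of i₀ hi₀I (by linarith)
  set S := I.erase i₀ with hS
  have hxS : ∀ i ∈ S, x i ≤ y i := fun i hi =>
    (hinc i (Finset.mem_of_mem_erase hi) (Finset.ne_of_mem_erase hi)).le
  -- mass balance
  have hbal : ∑ i ∈ S, (y i - x i) = x i₀ - y i₀ := by
    have hx' : ∑ i ∈ I, x i = x i₀ + ∑ i ∈ S, x i :=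
      (Finset.add_sum_erase I x hi₀I).symm
    have hy' : ∑ i ∈ I, y i = y i₀ + ∑ i ∈ S, y i :=
      (Finset.add_sum_erase I y hi₀I).symm
    rw [Finset.sum_sub_distrib]
    rw [hx', hy'] at hsum
    linarith
  have hδ : ∑ i ∈ S, (y i - x i) ^ ((4 : ℝ) / 3) ≤ (x i₀) ^ ((4 : ℝ) / 3) := by
    calc ∑ i ∈ S, (y i - x i) ^ ((4 : ℝ) / 3)
        ≤ (∑ i ∈ S, (y i - x i)) ^ ((4 : ℝ) / 3) :=
          sum_rpow_four_thirds_le S _ (fun i hi => by linarith [hxS i hi])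
      _ = (x i₀ - y i₀) ^ ((4 : ℝ) / 3) := by rw [hbal]
      _ ≤ (x i₀) ^ ((4 : ℝ) / 3) :=
          Real.rpow_le_rpow (by linarith) (by linarith [hypos i₀]) (by norm_num)
  -- per-coordinate bound on S
  have hper : ∀ i ∈ S, (y i) ^ ((4 : ℝ) / 3)
      ≤ 2 ^ ((4 : ℝ) / 3) * ((x i) ^ ((4 : ℝ) / 3) + (y i - x i) ^ ((4 : ℝ) / 3)) := by
    intro i hi
    have := add_rpow_four_thirds_le (hxpos i).le (by linarith [hxS i hi] : (0:ℝ) ≤ y i - x i)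
    have he : x i + (y i - x i) = y i := by ring
    rwa [he] at this
  have h2le4 : (2 : ℝ) ^ ((4 : ℝ) / 3) ≤ 4 := by
    have : (2 : ℝ) ^ ((4 : ℝ) / 3) ≤ 2 ^ (2 : ℝ) :=
      Real.rpow_le_rpow_of_exponent_le (by norm_num) (by norm_num)
    have h4 : (2 : ℝ) ^ (2 : ℝ) = 4 := by
      rw [show (2 : ℝ) = ((2 : ℕ) : ℝ) by norm_num, Real.rpow_natCast]; norm_num
    linarith
  have h2pos : (0 : ℝ) < 2 ^ ((4 : ℝ) / 3) := Real.rpow_pos_of_pos (by norm_num) _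
  -- combine
  have hyI : ∑ i ∈ I, (y i) ^ ((4 : ℝ) / 3)
      = (y i₀) ^ ((4 : ℝ) / 3) + ∑ i ∈ S, (y i) ^ ((4 : ℝ) / 3) :=
    (Finset.add_sum_erase I (fun i => (y i) ^ ((4 : ℝ) / 3)) hi₀I).symm
  have hxI : ∑ i ∈ I, (x i) ^ ((4 : ℝ) / 3)
      = (x i₀) ^ ((4 : ℝ) / 3) + ∑ i ∈ S, (x i) ^ ((4 : ℝ) / 3) :=
    (Finset.add_sum_erase I (fun i => (x i) ^ ((4 : ℝ) / 3)) hi₀I).symm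
  have hSy : ∑ i ∈ S, (y i) ^ ((4 : ℝ) / 3)
      ≤ 2 ^ ((4 : ℝ) / 3) * (∑ i ∈ S, (x i) ^ ((4 : ℝ) / 3)
        + ∑ i ∈ S, (y i - x i) ^ ((4 : ℝ) / 3)) := by
    calc ∑ i ∈ S, (y i) ^ ((4 : ℝ) / 3)
        ≤ ∑ i ∈ S, 2 ^ ((4 : ℝ) / 3) * ((x i) ^ ((4 : ℝ) / 3) + (y i - x i) ^ ((4 : ℝ) / 3)) :=
          Finset.sum_le_sum hper
      _ = 2 ^ ((4 : ℝ) / 3) * (∑ i ∈ S, (x i) ^ ((4 : ℝ) / 3)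
            + ∑ i ∈ S, (y i - x i) ^ ((4 : ℝ) / 3)) := by
          rw [← Finset.mul_sum, Finset.sum_add_distrib]
  have hy₀ : (y i₀) ^ ((4 : ℝ) / 3) ≤ (x i₀) ^ ((4 : ℝ) / 3) :=
    Real.rpow_le_rpow (hypos i₀).le hyx₀ (by norm_num)
  have hxSnn : 0 ≤ ∑ i ∈ S, (x i) ^ ((4 : ℝ) / 3) :=
    Finset.sum_nonneg fun i _ => Real.rpow_nonneg (hxpos i).le _
  have hx₀nn : 0 ≤ (x i₀) ^ ((4 : ℝ) / 3) := Real.rpow_nonneg (hxpos i₀).le _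
  have hδnn : 0 ≤ ∑ i ∈ S, (y i - x i) ^ ((4 : ℝ) / 3) :=
    Finset.sum_nonneg fun i hi => Real.rpow_nonneg (by linarith [hxS i hi]) _
  calc ∑ i ∈ I, (y i) ^ ((4 : ℝ) / 3)
      = (y i₀) ^ ((4 : ℝ) / 3) + ∑ i ∈ S, (y i) ^ ((4 : ℝ) / 3) := hyI
    _ ≤ (x i₀) ^ ((4 : ℝ) / 3) + 2 ^ ((4 : ℝ) / 3) * (∑ i ∈ S, (x i) ^ ((4 : ℝ) / 3)
          + ∑ i ∈ S, (y i - x i) ^ ((4 : ℝ) / 3)) := by linarith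
    _ ≤ (x i₀) ^ ((4 : ℝ) / 3) + 4 * (∑ i ∈ S, (x i) ^ ((4 : ℝ) / 3)
          + (x i₀) ^ ((4 : ℝ) / 3)) := by nlinarith
    _ ≤ 8 * ((x i₀) ^ ((4 : ℝ) / 3) + ∑ i ∈ S, (x i) ^ ((4 : ℝ) / 3)) := by linarith
    _ = 8 * ∑ i ∈ I, (x i) ^ ((4 : ℝ) / 3) := by rw [← hxI]
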